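/- Let N ≥ 1, d ≥ 1, and let z_1, ..., z_{N+1} be the roots of P(z) = (z-1)^N (z-y) - qz over an algebraic closure of ℚ(q,y). For ℓ ≥ 1, let h_j denote complete homogeneous and e_j elementary symmetric polynomials in z_1,...,z_{N+1}, and for 0 ≤ m ≤ N let s_{(ℓ,1^{N-m})} be the hook Schur polynomial. Then [q^d] Σ_{m=0}^{N} (-y)^m s_{(ℓ,1^{N-m})}(z_1,...,z_{N+1}) = (-1)^N [t^ℓ] ( y t^{N(d-1)+1} / ((1-t)^{Nd} (1-yt)^{d+1}) ). -/

import Mathlib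

/- STATEMENT 15: Let `z_1,…,z_{N+1}` be the roots of `P(z) = (z-1)^N (z-y) - qz`;
symmetric polynomials in the roots are, via Vieta, polynomials in `q` over `ℚ(y)`.
For `ℓ ≥ 1`, `d ≥ 1` and the hook Schur polynomials `s_{(ℓ,1^(N-m))}` (dual
Jacobi–Trudi determinants of size `ℓ` in the `e_j`):
`[q^d] Σ_{m=0}^N (-y)^m s_{(ℓ,1^(N-m))} = (-1)^N [t^ℓ] (y t^(N(d-1)+1) / ((1-t)^(Nd)(1-yt)^(d+1)))`. -/

open Polynomial

/-- `P(z) = (z-1)^N (z-y) - qz`, a polynomial in `z` over `ℚ(y)[q]`. -/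
noncomputable def Pz (N : ℕ) : Polynomial (Polynomial (RatFunc ℚ)) :=
  (Polynomial.X - 1) ^ N * (Polynomial.X - Polynomial.C (Polynomial.C RatFunc.X)) -
    Polynomial.C Polynomial.X * Polynomial.X

/-- `e_j(z_1,…,z_{N+1}) ∈ ℚ(y)[q]` via Vieta: `e_j = (-1)^j ⬝ [z^(N+1-j)] P`. -/
noncomputable def elemE (N : ℕ) (j : ℤ) : Polynomial (RatFunc ℚ) :=
  if 0 ≤ j ∧ j ≤ (N : ℤ) + 1 then
    (-1 : Polynomial (RatFunc ℚ)) ^ j.toNat * (Pz N).coeff (N + 1 - j.toNat)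
  else 0

/-- The dual Jacobi–Trudi matrix of the hook `(ℓ, 1^(N-m))`, of size `ℓ`:
conjugate partition `(N-m+1, 1^(ℓ-1))`, entries `e_{λ'_i - i + j}`. -/
noncomputable def hookM (N m ℓ : ℕ) : Matrix (Fin ℓ) (Fin ℓ) (Polynomial (RatFunc ℚ)) :=
  Matrix.of fun i j =>
    if (i : ℕ) = 0 then elemE N ((N : ℤ) - m + (j : ℕ) + 1)
    else elemE N (((j : ℕ) : ℤ) - ((i : ℕ) : ℤ) + 1)

abbrev Kq : Type := RatFunc ℚ
abbrev Rq : Type := Polynomial (RatFunc ℚ)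

noncomputable def yy : Rq := Polynomial.C RatFunc.X

noncomputable def Ep (N : ℕ) : Polynomial Rq :=
  (1 - Polynomial.X) ^ N * (1 - Polynomial.C yy * Polynomial.X) -
    Polynomial.C Polynomial.X * Polynomial.X ^ N

lemma reflect_sub' (p q : Polynomial Rq) (n : ℕ) :
    (p - q).reflect n = p.reflect n - q.reflect n := by
  ext i; simp [coeff_reflect, coeff_sub]

lemma reflect_one_sub_X (N : ℕ) :
    ((Polynomial.X - 1 : Polynomial Rq) ^ N).reflect N = (1 - Polynomial.X) ^ N := by
  induction N with
  | zero => simp [reflect_one]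
  | succ n ih =>
      have h1 : ((Polynomial.X - 1 : Polynomial Rq) ^ n).natDegree ≤ n := by
        apply le_trans (natDegree_pow_le)
        have : (Polynomial.X - 1 : Polynomial Rq).natDegree ≤ 1 := by
          simpa using natDegree_X_sub_C_le (1 : Rq)
        nlinarith [this]
      have h2 : (Polynomial.X - 1 : Polynomial Rq).natDegree ≤ 1 := by
        simpa using natDegree_X_sub_C_le (1 : Rq)
      rw [pow_succ, reflect_mul _ _ h1 h2, ih, pow_succ]
      congr 1
      have : (Polynomial.X - 1 : Polynomial Rq) = Polynomial.X ^ 1 - Polynomial.C 1 * Polynomial.X ^ 0 := by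
        simp
      rw [this, reflect_sub', reflect_monomial]
      rw [reflect_C_mul, reflect_monomial]
      simp [revAt_le]

lemma reflect_Pz (N : ℕ) : (Pz N).reflect (N + 1) = Ep N := by
  unfold Pz Ep
  rw [reflect_sub']
  congr 1
  · have h1 : ((Polynomial.X - 1 : Polynomial Rq) ^ N).natDegree ≤ N := by
      apply le_trans (natDegree_pow_le)
      have : (Polynomial.X - 1 : Polynomial Rq).natDegree ≤ 1 := by
        simpa using natDegree_X_sub_C_le (1 : Rq)
      nlinarith [this]
    have h2 : (Polynomial.X - Polynomial.C yy : Polynomial Rq).natDegree ≤ 1 :=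
      natDegree_X_sub_C_le yy
    rw [show (Polynomial.X - Polynomial.C (Polynomial.C RatFunc.X) : Polynomial Rq)
        = Polynomial.X - Polynomial.C yy from rfl]
    rw [reflect_mul _ _ h1 h2, reflect_one_sub_X]
    congr 1
    have : (Polynomial.X - Polynomial.C yy : Polynomial Rq)
        = Polynomial.X ^ 1 - Polynomial.C yy * Polynomial.X ^ 0 := by simp
    rw [this, reflect_sub', reflect_monomial, reflect_C_mul, reflect_monomial]
    simp [revAt_le]
  · have : (Polynomial.C Polynomial.X * Polynomial.X : Polynomial Rq)
        = Polynomial.C Polynomial.X * Polynomial.X ^ 1 := by simp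
    rw [this, reflect_C_mul, reflect_monomial]
    congr 1

lemma natDegree_Pz (N : ℕ) : (Pz N).natDegree ≤ N + 1 := by
  unfold Pz
  apply le_trans (natDegree_sub_le _ _)
  simp only [max_le_iff]
  constructor
  · apply le_trans (natDegree_mul_le)
    have h1 : ((Polynomial.X - 1 : Polynomial Rq) ^ N).natDegree ≤ N := by
      apply le_trans (natDegree_pow_le)
      have : (Polynomial.X - 1 : Polynomial Rq).natDegree ≤ 1 := by
        simpa using natDegree_X_sub_C_le (1 : Rq)
      nlinarith [this]
    have h2 := natDegree_X_sub_C_le (Polynomial.C RatFunc.X : Rq)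
    omega
  · apply le_trans (natDegree_mul_le)
    simp

lemma elemE_eq (N : ℕ) (j : ℕ) : elemE N (j : ℤ) = (-1) ^ j * (Ep N).coeff j := by
  rw [← reflect_Pz, coeff_reflect]
  unfold elemE
  by_cases h : (j : ℤ) ≤ (N : ℤ) + 1
  · rw [if_pos ⟨Int.natCast_nonneg j, h⟩]
    have hj : j ≤ N + 1 := by exact_mod_cast h
    rw [revAt_le hj, Int.toNat_natCast]
  · rw [if_neg (by tauto)]
    have hj : N + 1 < j := by
      have := not_le.mp h; exact_mod_cast this
    rw [(Polynomial.coeff_eq_zero_of_natDegree_lt ?_ : (Pz N).coeff ((revAt (N+1)) j) = 0), mul_zero]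
    rw [revAt_eq_self_of_lt (by omega)]
    have := natDegree_Pz N
    omega

open PowerSeries in
noncomputable def EE (N : ℕ) : PowerSeries Rq := (Ep N : PowerSeries Rq)

noncomputable def HH (N : ℕ) : PowerSeries Rq := (EE N).invOfUnit 1

noncomputable def hh (N r : ℕ) : Rq := PowerSeries.coeff (R := Rq) r (HH N)

lemma Ep_coeff_zero (N : ℕ) (hN : 1 ≤ N) : (Ep N).coeff 0 = 1 := by
  unfold Ep
  rw [Polynomial.coeff_zero_eq_eval_zero]
  simp [zero_pow (by omega : N ≠ 0)]

lemma constCoeff_EE (N : ℕ) (hN : 1 ≤ N) :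
    PowerSeries.constantCoeff (R := Rq) (EE N) = 1 := by
  rw [← PowerSeries.coeff_zero_eq_constantCoeff_apply]
  unfold EE
  rw [Polynomial.coeff_coe, Ep_coeff_zero N hN]

lemma EH (N : ℕ) (hN : 1 ≤ N) : EE N * HH N = 1 :=
  PowerSeries.mul_invOfUnit _ 1 (by rw [constCoeff_EE N hN]; rfl)

lemma hh_zero (N : ℕ) : hh N 0 = 1 := by
  unfold hh HH
  rw [PowerSeries.coeff_zero_eq_constantCoeff_apply, PowerSeries.constantCoeff_invOfUnit]
  rfl

lemma en_eq (N : ℕ) (j : ℕ) : (Ep N).coeff j = (-1) ^ j * elemE N (j : ℤ) := by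
  rw [elemE_eq, ← mul_assoc, ← mul_pow]
  simp

lemma elemE_neg (N : ℕ) (j : ℤ) (hj : j < 0) : elemE N j = 0 := by
  unfold elemE; rw [if_neg (by omega)]

lemma elemE_zero (N : ℕ) (hN : 1 ≤ N) : elemE N 0 = 1 := by
  have := elemE_eq N 0
  simpa [Ep_coeff_zero N hN] using this

/-- geometric series with ratio `a` -/
noncomputable def geo {R : Type*} [CommRing R] (a : R) : PowerSeries R :=
  PowerSeries.mk fun k => a ^ k

lemma geo_spec {R : Type*} [CommRing R] (a : R) :
    (1 - PowerSeries.C (R := R) a * PowerSeries.X) * geo a = 1 := by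
  ext n
  rw [sub_mul, one_mul, mul_assoc]
  cases n with
  | zero => simp [geo]
  | succ n =>
      rw [map_sub, PowerSeries.coeff_C_mul, PowerSeries.coeff_succ_X_mul]
      simp [geo, pow_succ, mul_comm]

lemma EE_expr (N : ℕ) :
    EE N = (1 - PowerSeries.X) ^ N * (1 - PowerSeries.C (R := Rq) yy * PowerSeries.X) -
      PowerSeries.C (R := Rq) Polynomial.X * PowerSeries.X ^ N := by
  unfold EE Ep
  push_cast [Polynomial.coe_sub, Polynomial.coe_mul, Polynomial.coe_pow,
    Polynomial.coe_one, Polynomial.coe_C, Polynomial.coe_X]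
  rfl

/-- coercion of the binomial polynomial -/
lemma Bp_coe (N : ℕ) : (((1 - Polynomial.X : Polynomial Rq) ^ N : Polynomial Rq) : PowerSeries Rq)
    = (1 - PowerSeries.X) ^ N := by
  push_cast [Polynomial.coe_pow, Polynomial.coe_sub, Polynomial.coe_one, Polynomial.coe_X]
  rfl

/-- key identity: `geo yy * EE = (1-X)^N - q * X^N * geo yy` -/
lemma ID1 (N : ℕ) :
    geo yy * EE N = (1 - PowerSeries.X) ^ N
      - PowerSeries.C (R := Rq) Polynomial.X * (PowerSeries.X ^ N * geo yy) := by
  rw [EE_expr]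
  have h := geo_spec yy
  calc geo yy * ((1 - PowerSeries.X) ^ N * (1 - PowerSeries.C (R := Rq) yy * PowerSeries.X) -
        PowerSeries.C (R := Rq) Polynomial.X * PowerSeries.X ^ N)
      = (1 - PowerSeries.X) ^ N * ((1 - PowerSeries.C (R := Rq) yy * PowerSeries.X) * geo yy) -
        PowerSeries.C (R := Rq) Polynomial.X * (PowerSeries.X ^ N * geo yy) := by ring
    _ = _ := by rw [h]; ring

lemma Hrec (N : ℕ) (hN : 1 ≤ N) (n : ℕ) (hn : 1 ≤ n) :
    ∑ i ∈ Finset.range n, (-1) ^ i * elemE N (1 + (i : ℕ) : ℤ) * hh N (n - 1 - i) = hh N n := by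
  have h0 : PowerSeries.coeff (R := Rq) n (EE N * HH N) = 0 := by
    rw [EH N hN, PowerSeries.coeff_one, if_neg (by omega)]
  rw [PowerSeries.coeff_mul, Finset.Nat.sum_antidiagonal_eq_sum_range_succ_mk,
    Finset.sum_range_succ'] at h0
  simp only [EE, Polynomial.coeff_coe] at h0
  have hterm : ∀ i ∈ Finset.range n, (-1:Rq)^i * elemE N (1 + (i:ℕ) : ℤ) * hh N (n - 1 - i)
      = -((Ep N).coeff (i+1) * PowerSeries.coeff (R := Rq) (n - (i+1)) (HH N)) := by
    intro i _
    rw [en_eq]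
    have h1 : ((i + 1 : ℕ) : ℤ) = 1 + (i : ℕ) := by push_cast; ring
    rw [h1]
    have h2 : n - (i+1) = n - 1 - i := by omega
    rw [h2]
    show _ = -((-1:Rq)^(i+1) * elemE N (1 + (i:ℕ)) * hh N (n-1-i))
    rw [pow_succ]
    ring
  rw [Finset.sum_congr rfl hterm]
  rw [Finset.sum_neg_distrib]
  rw [Ep_coeff_zero N hN, Nat.sub_zero, one_mul] at h0
  show -∑ i ∈ Finset.range n, (Ep N).coeff (i+1) * PowerSeries.coeff (R := Rq) (n - (i+1)) (HH N)
      = PowerSeries.coeff (R := Rq) n (HH N)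
  linear_combination -h0

noncomputable def genM (N : ℕ) (a : ℤ) (ℓ : ℕ) : Matrix (Fin ℓ) (Fin ℓ) Rq :=
  Matrix.of fun i j =>
    if (i : ℕ) = 0 then elemE N (a + (j : ℕ))
    else elemE N (((j : ℕ) : ℤ) - ((i : ℕ) : ℤ) + 1)

lemma hookM_eq_genM (N m ℓ : ℕ) : hookM N m ℓ = genM N ((N : ℤ) - m + 1) ℓ := by
  unfold hookM genM
  ext i j
  simp only [Matrix.of_apply]
  split
  · congr 1; ring
  · rfl

lemma detD (N : ℕ) (hN : 1 ≤ N) :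
    ∀ ℓ : ℕ, 1 ≤ ℓ → ∀ a : ℤ,
      (genM N a ℓ).det =
        ∑ i ∈ Finset.range ℓ, (-1) ^ i * elemE N (a + (i : ℕ)) * hh N (ℓ - 1 - i) := by
  intro ℓ
  induction ℓ with
  | zero => intro h; omega
  | succ l ih =>
    intro _ a
    rcases Nat.eq_zero_or_pos l with rfl | hl
    · rw [Matrix.det_fin_one]
      simp [genM, hh_zero]
    · obtain ⟨l', rfl⟩ : ∃ l', l = l' + 1 := ⟨l - 1, by omega⟩
      rw [Matrix.det_succ_column_zero, Fin.sum_univ_succ, Fin.sum_univ_succ]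
      have hzero : ∀ i : Fin l',
          ((-1 : Rq) ^ ((((i.succ).succ : Fin (l' + 1 + 1))) : ℕ) *
            genM N a (l' + 1 + 1) (i.succ).succ 0 *
            ((genM N a (l' + 1 + 1)).submatrix ((i.succ).succ).succAbove Fin.succ).det) = 0 := by
        intro i
        have : genM N a (l' + 1 + 1) (i.succ).succ 0 = 0 := by
          simp only [genM, Matrix.of_apply, Fin.val_succ, Fin.val_zero]
          rw [if_neg (by omega)]
          apply elemE_neg
          push_cast
          omega
        rw [this, mul_zero, zero_mul]
      rw [Finset.sum_eq_zero (fun i _ => hzero i)]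
      have e00 : genM N a (l' + 1 + 1) 0 0 = elemE N (a + ((0 : Fin (l'+1+1)) : ℕ)) := by
        simp [genM]
      have e10 : genM N a (l' + 1 + 1) (Fin.succ 0) 0 = 1 := by
        simp only [genM, Matrix.of_apply, Fin.val_succ, Fin.val_zero]
        simp only [Nat.add_one_ne_zero, ite_false]
        simpa using elemE_zero N hN
      have hsub0 : (genM N a (l'+1+1)).submatrix (Fin.succAbove 0) Fin.succ
          = genM N 1 (l'+1) := by
        ext i j
        simp only [Matrix.submatrix_apply, Fin.succAbove_zero, genM, Matrix.of_apply,
          Fin.val_succ]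
        rw [if_neg (by omega)]
        by_cases h : (i : ℕ) = 0
        · rw [if_pos h, h]
          congr 1; push_cast; ring
        · rw [if_neg h]
          congr 1; push_cast; ring
      have hsub1 : (genM N a (l'+1+1)).submatrix (Fin.succ 0).succAbove Fin.succ
          = genM N (a+1) (l'+1) := by
        ext i j
        simp only [Matrix.submatrix_apply]
        by_cases h : (i : ℕ) = 0
        · have hrow : (Fin.succ 0 : Fin (l'+1+1)).succAbove i = Fin.castSucc i := by
            apply Fin.succAbove_of_castSucc_lt
            rw [Fin.lt_def]
            simp [h]
          rw [hrow]
          simp only [genM, Matrix.of_apply, Fin.coe_castSucc, Fin.val_succ]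
          rw [if_pos h, if_pos h]
          congr 1; push_cast; ring
        · have hrow : (Fin.succ 0 : Fin (l'+1+1)).succAbove i = Fin.succ i := by
            apply Fin.succAbove_of_le_castSucc
            rw [Fin.le_def]
            simp
            omega
          rw [hrow]
          simp only [genM, Matrix.of_apply, Fin.val_succ]
          rw [if_neg (by omega), if_neg h]
          congr 1; push_cast; ring
      rw [e00, e10, hsub0, hsub1, ih (by omega) 1, ih (by omega) (a+1)]
      have hH := Hrec N hN (l'+1) (by omega)
      have hcast : ∀ i ∈ Finset.range (l'+1),
          (-1 : Rq)^i * elemE N ((1:ℤ) + (i:ℕ)) * hh N (l'+1-1-i)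
            = (-1)^i * elemE N (1 + (i:ℕ) : ℤ) * hh N (l'+1-1-i) := by
        intro i _; rfl
      rw [Finset.sum_congr rfl hcast, hH]
      rw [Finset.sum_range_succ' (fun i => (-1:Rq)^i * elemE N (a + (i:ℕ)) * hh N (l'+1+1-1-i)) (l'+1)]
      have hc2 : ∀ i ∈ Finset.range (l'+1),
          (-1 : Rq)^(i+1) * elemE N (a + ((i+1 : ℕ) : ℕ)) * hh N (l'+1+1-1-(i+1))
            = -((-1)^i * elemE N ((a+1) + (i:ℕ)) * hh N (l'+1-1-i)) := by
        intro i _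
        have h1 : (a + ((i+1 : ℕ) : ℤ)) = (a + 1) + (i : ℕ) := by push_cast; ring
        have h2 : l'+1+1-1-(i+1) = l'+1-1-i := by omega
        rw [h1, h2, pow_succ]
        ring
      rw [Finset.sum_congr rfl hc2, Finset.sum_neg_distrib]
      simp only [Fin.val_zero, pow_zero, Fin.val_succ, pow_one, Nat.cast_zero, add_zero,
        Nat.sub_zero, mul_one, one_mul, Nat.add_sub_cancel]
      ring

lemma tri {M : Type*} [AddCommMonoid M] (n : ℕ) (f : ℕ → ℕ → M) :
    ∑ m ∈ Finset.range (n+1), ∑ j ∈ Finset.range (n+1-m), f m j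
      = ∑ s ∈ Finset.range (n+1), ∑ m ∈ Finset.range (s+1), f m (s-m) := by
  induction n with
  | zero => simp
  | succ n ih =>
    conv_rhs => rw [Finset.sum_range_succ]
    rw [← ih]
    rw [Finset.sum_range_succ (fun m => ∑ j ∈ Finset.range (n+1+1-m), f m j) (n+1)]
    have h1 : ∀ m ∈ Finset.range (n+1), ∑ j ∈ Finset.range (n+1+1-m), f m j
        = ∑ j ∈ Finset.range (n+1-m), f m j + f m (n+1-m) := by
      intro m hm
      simp only [Finset.mem_range] at hm
      rw [show n+1+1-m = (n+1-m)+1 from by omega, Finset.sum_range_succ]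
    rw [Finset.sum_congr rfl h1, Finset.sum_add_distrib]
    rw [show n+1+1-(n+1) = 1 from by omega, Finset.sum_range_one]
    rw [Finset.sum_range_succ (fun m => f m (n+1-m)) (n+1)]
    rw [show n+1-(n+1) = 0 from by omega]
    abel

noncomputable def Bp (N : ℕ) : Polynomial Rq := (1 - Polynomial.X) ^ N

lemma natDegree_Bp (N : ℕ) : (Bp N).natDegree ≤ N := by
  unfold Bp
  apply le_trans (natDegree_pow_le)
  have : (1 - Polynomial.X : Polynomial Rq).natDegree ≤ 1 := by
    apply le_trans (natDegree_sub_le _ _)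
    simp
  nlinarith [this]

lemma coeff_geoEE (N s : ℕ) :
    PowerSeries.coeff (R := Rq) s (geo yy * EE N)
      = (Bp N).coeff s - Polynomial.X * (if N ≤ s then yy ^ (s - N) else 0) := by
  rw [ID1, map_sub]
  congr 1
  · rw [← Bp_coe, Polynomial.coeff_coe]; rfl
  · rw [PowerSeries.coeff_C_mul, PowerSeries.coeff_X_pow_mul']
    congr 1
    split <;> simp [geo]

lemma sum_bin_hh (N ℓ : ℕ) (hN : 1 ≤ N) (hℓ : 1 ≤ ℓ) :
    ∑ s ∈ Finset.range (N+1), (Bp N).coeff s * hh N (N+ℓ-s)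
      = yy^(N+ℓ) + Polynomial.X * (hh N ℓ + ∑ b ∈ Finset.range ℓ, yy^(b+1) * hh N (ℓ-1-b)) := by
  have hBH : ((Bp N : Polynomial Rq) : PowerSeries Rq) * HH N
      = geo yy + PowerSeries.C (R := Rq) Polynomial.X * (PowerSeries.X ^ N * (geo yy * HH N)) := by
    have hB : ((Bp N : Polynomial Rq) : PowerSeries Rq)
        = geo yy * EE N + PowerSeries.C (R := Rq) Polynomial.X * (PowerSeries.X ^ N * geo yy) := by
      unfold Bp
      rw [Bp_coe]
      linear_combination - ID1 N
    calc ((Bp N : Polynomial Rq) : PowerSeries Rq) * HH N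
        = geo yy * (EE N * HH N)
          + PowerSeries.C (R := Rq) Polynomial.X * (PowerSeries.X ^ N * (geo yy * HH N)) := by
          rw [hB]; ring
      _ = _ := by rw [EH N hN]; ring
  have hcoeff : ∑ s ∈ Finset.range (N+1), (Bp N).coeff s * hh N (N+ℓ-s)
      = PowerSeries.coeff (R := Rq) (N+ℓ) (((Bp N : Polynomial Rq) : PowerSeries Rq) * HH N) := by
    rw [PowerSeries.coeff_mul, Finset.Nat.sum_antidiagonal_eq_sum_range_succ_mk]
    simp only [Nat.succ_eq_add_one]
    rw [show N+ℓ+1 = (N+1)+ℓ from by omega]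
    rw [← Finset.sum_range_add_sum_Ico _ (show N+1 ≤ N+1+ℓ from by omega)]
    have hz : ∑ j ∈ Finset.Ico (N+1) (N+1+ℓ),
        PowerSeries.coeff (R := Rq) j ((Bp N : Polynomial Rq) : PowerSeries Rq)
          * PowerSeries.coeff (R := Rq) (N+ℓ-j) (HH N) = 0 := by
      apply Finset.sum_eq_zero
      intro j hj
      simp only [Finset.mem_Ico] at hj
      rw [Polynomial.coeff_coe, Polynomial.coeff_eq_zero_of_natDegree_lt, zero_mul]
      have := natDegree_Bp N
      omega
    rw [hz, add_zero]
    apply Finset.sum_congr rfl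
    intro j _
    rw [Polynomial.coeff_coe]
    rfl
  rw [hcoeff, hBH, map_add, PowerSeries.coeff_C_mul, PowerSeries.coeff_X_pow_mul']
  rw [if_pos (show N ≤ N+ℓ from by omega), show N+ℓ-N = ℓ from by omega]
  have hgeo : PowerSeries.coeff (R := Rq) (N+ℓ) (geo yy) = yy^(N+ℓ) := by simp [geo]
  have hgh : PowerSeries.coeff (R := Rq) ℓ (geo yy * HH N)
      = hh N ℓ + ∑ b ∈ Finset.range ℓ, yy^(b+1) * hh N (ℓ-1-b) := by
    rw [PowerSeries.coeff_mul, Finset.Nat.sum_antidiagonal_eq_sum_range_succ_mk,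
      Finset.sum_range_succ']
    have h1 : ∀ b ∈ Finset.range ℓ,
        PowerSeries.coeff (R := Rq) (b+1) (geo yy) * PowerSeries.coeff (R := Rq) (ℓ-(b+1)) (HH N)
          = yy^(b+1) * hh N (ℓ-1-b) := by
      intro b _
      rw [show ℓ-(b+1) = ℓ-1-b from by omega]
      simp [geo, hh]
    rw [Finset.sum_congr rfl h1]
    simp [geo, hh]
    ring
  rw [hgeo, hgh]

lemma KEY1 (N ℓ : ℕ) (hN : 1 ≤ N) (hℓ : 1 ≤ ℓ) :
    (∑ m ∈ Finset.range (N + 1),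
        Polynomial.C ((-(RatFunc.X : RatFunc ℚ)) ^ m) * Matrix.det (hookM N m ℓ))
      = (-1 : Rq)^N * (yy^(N+ℓ)
          + Polynomial.X * ∑ b ∈ Finset.range ℓ, yy^(b+1) * hh N (ℓ-1-b)) := by
  have key_m : ∀ m ∈ Finset.range (N+1),
      Polynomial.C ((-(RatFunc.X : RatFunc ℚ)) ^ m) * Matrix.det (hookM N m ℓ)
        = (-1 : Rq)^N * ∑ j ∈ Finset.range (N+1-m),
            yy^m * (Ep N).coeff j * hh N (N+ℓ-m-j) := by
    intro m hm
    simp only [Finset.mem_range] at hm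
    rw [hookM_eq_genM, detD N hN ℓ hℓ]
    have hterm : ∀ i ∈ Finset.range ℓ,
        (-1 : Rq)^i * elemE N ((N:ℤ) - m + 1 + (i:ℕ)) * hh N (ℓ-1-i)
          = (-1)^(N+1-m) * ((Ep N).coeff (N+1-m+i) * hh N (ℓ-1-i)) := by
      intro i _
      rw [show (N:ℤ) - m + 1 + (i:ℕ) = ((N+1-m+i : ℕ) : ℤ) from by omega, elemE_eq]
      have hs : (-1:Rq)^i * (-1)^(N+1-m+i) = (-1)^(N+1-m) := by
        rw [← pow_add, show i + (N+1-m+i) = (N+1-m) + 2*i from by omega, pow_add, pow_mul]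
        simp
      linear_combination ((Ep N).coeff (N+1-m+i) * hh N (ℓ-1-i)) * hs
    rw [Finset.sum_congr rfl hterm, ← Finset.mul_sum]
    have hA2 : ∑ i ∈ Finset.range ℓ, (Ep N).coeff (N+1-m+i) * hh N (ℓ-1-i)
        = -∑ j ∈ Finset.range (N+1-m), (Ep N).coeff j * hh N (N+ℓ-m-j) := by
      have h0 : PowerSeries.coeff (R := Rq) (N+ℓ-m) (EE N * HH N) = 0 := by
        rw [EH N hN, PowerSeries.coeff_one, if_neg (by omega)]
      rw [PowerSeries.coeff_mul, Finset.Nat.sum_antidiagonal_eq_sum_range_succ_mk] at h0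
      simp only [EE, Polynomial.coeff_coe, Nat.succ_eq_add_one] at h0
      rw [show N+ℓ-m+1 = (N+1-m)+ℓ from by omega,
        ← Finset.sum_range_add_sum_Ico _ (show N+1-m ≤ N+1-m+ℓ from by omega),
        Finset.sum_Ico_eq_sum_range] at h0
      rw [show N+1-m+ℓ-(N+1-m) = ℓ from by omega] at h0
      have h1 : ∀ i ∈ Finset.range ℓ,
          (Ep N).coeff (N+1-m+i) * PowerSeries.coeff (R := Rq) (N+ℓ-m-(N+1-m+i)) (HH N)
            = (Ep N).coeff (N+1-m+i) * hh N (ℓ-1-i) := by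
        intro i _
        rw [show N+ℓ-m-(N+1-m+i) = ℓ-1-i from by omega]
        rfl
      rw [Finset.sum_congr rfl h1] at h0
      have h2 : ∀ j ∈ Finset.range (N+1-m),
          (Ep N).coeff j * PowerSeries.coeff (R := Rq) (N+ℓ-m-j) (HH N)
            = (Ep N).coeff j * hh N (N+ℓ-m-j) := fun j _ => rfl
      rw [Finset.sum_congr rfl h2] at h0
      linear_combination h0
    rw [hA2]
    have hC : (Polynomial.C ((-(RatFunc.X : RatFunc ℚ)) ^ m) : Rq) = (-1)^m * yy^m := by
      rw [map_pow, map_neg, neg_pow]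
      rfl
    rw [hC]
    have hmulsum : ∑ j ∈ Finset.range (N+1-m), yy^m * (Ep N).coeff j * hh N (N+ℓ-m-j)
        = yy^m * ∑ j ∈ Finset.range (N+1-m), (Ep N).coeff j * hh N (N+ℓ-m-j) := by
      rw [Finset.mul_sum]; exact Finset.sum_congr rfl (fun j _ => by ring)
    rw [hmulsum]
    have hsign : ((-1:Rq)^m) * ((-1)^(N+1-m)) * (-1) = (-1)^N := by
      rw [← pow_add, show m + (N+1-m) = N+1 from by omega, pow_succ]; ring
    linear_combination
      (yy^m * (∑ j ∈ Finset.range (N+1-m), (Ep N).coeff j * hh N (N+ℓ-m-j))) * hsign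
  rw [Finset.sum_congr rfl key_m, ← Finset.mul_sum]
  congr 1
  rw [tri N (fun m j => yy^m * (Ep N).coeff j * hh N (N+ℓ-m-j))]
  have hinner : ∀ s ∈ Finset.range (N+1),
      (∑ m ∈ Finset.range (s+1), yy^m * (Ep N).coeff (s-m) * hh N (N+ℓ-m-(s-m)))
        = (Bp N).coeff s * hh N (N+ℓ-s)
          - Polynomial.X * (if N ≤ s then yy^(s-N) else 0) * hh N (N+ℓ-s) := by
    intro s hs
    simp only [Finset.mem_range] at hs
    have h3 : ∀ m ∈ Finset.range (s+1),
        yy^m * (Ep N).coeff (s-m) * hh N (N+ℓ-m-(s-m))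
          = (yy^m * (Ep N).coeff (s-m)) * hh N (N+ℓ-s) := by
      intro m hm
      simp only [Finset.mem_range] at hm
      rw [show N+ℓ-m-(s-m) = N+ℓ-s from by omega]
    rw [Finset.sum_congr rfl h3, ← Finset.sum_mul]
    have h4 : ∑ m ∈ Finset.range (s+1), yy^m * (Ep N).coeff (s-m)
        = PowerSeries.coeff (R := Rq) s (geo yy * EE N) := by
      rw [PowerSeries.coeff_mul, Finset.Nat.sum_antidiagonal_eq_sum_range_succ_mk]
      simp [geo, EE, Polynomial.coeff_coe]
    rw [h4, coeff_geoEE]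
    ring
  rw [Finset.sum_congr rfl hinner, Finset.sum_sub_distrib]
  have h5 : ∑ s ∈ Finset.range (N+1),
      Polynomial.X * (if N ≤ s then yy^(s-N) else 0) * hh N (N+ℓ-s)
        = Polynomial.X * hh N ℓ := by
    rw [Finset.sum_eq_single_of_mem N (Finset.self_mem_range_succ N)]
    · rw [if_pos le_rfl]
      simp
    · intro s hs hne
      simp only [Finset.mem_range] at hs
      rw [if_neg (by omega)]
      ring
  rw [h5, sum_bin_hh N ℓ hN hℓ]
  ring

noncomputable def Vp (N : ℕ) : PowerSeries Kq :=
  (1 - PowerSeries.X)^N * (1 - PowerSeries.C (R := Kq) RatFunc.X * PowerSeries.X)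

noncomputable def Vip (N : ℕ) : PowerSeries Kq := (Vp N).invOfUnit 1

lemma constCoeff_Vp (N : ℕ) : PowerSeries.constantCoeff (R := Kq) (Vp N) = 1 := by
  unfold Vp
  simp

lemma VVi (N : ℕ) : Vp N * Vip N = 1 :=
  PowerSeries.mul_invOfUnit _ 1 (by rw [constCoeff_Vp]; rfl)

lemma mapEE (N : ℕ) :
    PowerSeries.map (Polynomial.coeToPowerSeries.ringHom) (EE N)
      = PowerSeries.map (PowerSeries.C (R := Kq)) (Vp N)
        - PowerSeries.C (PowerSeries.X : PowerSeries Kq) * PowerSeries.X ^ N := by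
  rw [EE_expr]
  unfold Vp
  simp only [map_sub, map_mul, map_pow, map_one, PowerSeries.map_X, PowerSeries.map_C,
    Polynomial.coeToPowerSeries.ringHom_apply, yy, Polynomial.coe_C, Polynomial.coe_X]

lemma stepH (N : ℕ) (hN : 1 ≤ N) :
    PowerSeries.map (Polynomial.coeToPowerSeries.ringHom) (HH N)
      = PowerSeries.map (PowerSeries.C (R := Kq)) (Vip N)
        + PowerSeries.C (PowerSeries.X : PowerSeries Kq) * PowerSeries.X ^ N *
            (PowerSeries.map (PowerSeries.C (R := Kq)) (Vip N) *
              PowerSeries.map (Polynomial.coeToPowerSeries.ringHom) (HH N)) := by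
  have h2 : (PowerSeries.map (PowerSeries.C (R := Kq)) (Vp N)
        - PowerSeries.C (PowerSeries.X : PowerSeries Kq) * PowerSeries.X ^ N) *
      PowerSeries.map (Polynomial.coeToPowerSeries.ringHom) (HH N) = 1 := by
    rw [← mapEE, ← map_mul, EH N hN, map_one]
  have h3 : PowerSeries.map (PowerSeries.C (R := Kq)) (Vp N) *
      PowerSeries.map (PowerSeries.C (R := Kq)) (Vip N) = 1 := by
    rw [← map_mul, VVi, map_one]
  linear_combination PowerSeries.map (PowerSeries.C (R := Kq)) (Vip N) * h2
    - PowerSeries.map (Polynomial.coeToPowerSeries.ringHom) (HH N) * h3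

lemma iterH (N : ℕ) (hN : 1 ≤ N) (k : ℕ) :
    PowerSeries.map (Polynomial.coeToPowerSeries.ringHom) (HH N)
      = (∑ i ∈ Finset.range k,
          PowerSeries.C ((PowerSeries.X : PowerSeries Kq)^i) * PowerSeries.X^(N*i) *
            PowerSeries.map (PowerSeries.C (R := Kq)) (Vip N ^ (i+1)))
        + PowerSeries.C ((PowerSeries.X : PowerSeries Kq)^k) * PowerSeries.X^(N*k) *
            (PowerSeries.map (PowerSeries.C (R := Kq)) (Vip N ^ k) *
              PowerSeries.map (Polynomial.coeToPowerSeries.ringHom) (HH N)) := by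
  induction k with
  | zero => simp
  | succ k ih =>
      conv_lhs => rw [ih, stepH N hN]
      rw [Finset.sum_range_succ]
      simp only [map_pow]
      ring

lemma hc_eq (N d : ℕ) (hN : 1 ≤ N) (hd : 1 ≤ d) (r : ℕ) :
    (hh N r).coeff (d-1)
      = PowerSeries.coeff (R := Kq) r ((PowerSeries.X : PowerSeries Kq)^(N*(d-1)) * Vip N ^ d) := by
  have h0 : (hh N r).coeff (d-1)
      = PowerSeries.coeff (R := Kq) (d-1) (PowerSeries.coeff (R := (PowerSeries Kq)) r
          (PowerSeries.map (Polynomial.coeToPowerSeries.ringHom) (HH N))) := by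
    rw [PowerSeries.coeff_map, Polynomial.coeToPowerSeries.ringHom_apply, Polynomial.coeff_coe]
    rfl
  rw [h0, iterH N hN d]
  simp only [map_add, map_sum]
  have hterm : ∀ i ∈ Finset.range d,
      PowerSeries.coeff (R := Kq) (d-1) (PowerSeries.coeff (R := (PowerSeries Kq)) r
        (PowerSeries.C ((PowerSeries.X : PowerSeries Kq)^i) * PowerSeries.X^(N*i) *
          PowerSeries.map (PowerSeries.C (R := Kq)) (Vip N ^ (i+1))))
        = if i = d-1
            then PowerSeries.coeff (R := Kq) r ((PowerSeries.X : PowerSeries Kq)^(N*(d-1)) * Vip N ^ d)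
            else 0 := by
    intro i hi
    simp only [Finset.mem_range] at hi
    rw [mul_assoc, PowerSeries.coeff_C_mul, PowerSeries.coeff_X_pow_mul']
    by_cases hieq : i = d-1
    · subst hieq
      rw [if_pos le_rfl, if_pos rfl, Nat.sub_self, PowerSeries.coeff_X_pow_mul']
      by_cases hNi : N*(d-1) ≤ r
      · rw [if_pos hNi, PowerSeries.coeff_map, PowerSeries.coeff_zero_eq_constantCoeff_apply,
          PowerSeries.constantCoeff_C, PowerSeries.coeff_X_pow_mul', if_pos hNi,
          show (d-1)+1 = d from by omega]
      · rw [if_neg hNi, PowerSeries.coeff_X_pow_mul', if_neg hNi, map_zero]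
    · rw [if_neg hieq]
      rcases le_or_gt i (d-1) with hle | hlt
      · rw [if_pos hle, PowerSeries.coeff_X_pow_mul']
        by_cases hNi : N*i ≤ r
        · rw [if_pos hNi, PowerSeries.coeff_map, PowerSeries.coeff_C, if_neg (by omega)]
        · rw [if_neg hNi, map_zero]
      · rw [if_neg (by omega)]
  rw [Finset.sum_congr rfl hterm, Finset.sum_ite_eq' (Finset.range d) (d-1)]
  rw [if_pos (Finset.mem_range.mpr (by omega))]
  have hrem : PowerSeries.coeff (R := Kq) (d-1) (PowerSeries.coeff (R := (PowerSeries Kq)) r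
      (PowerSeries.C ((PowerSeries.X : PowerSeries Kq)^d) * PowerSeries.X^(N*d) *
        (PowerSeries.map (PowerSeries.C (R := Kq)) (Vip N ^ d) *
          PowerSeries.map (Polynomial.coeToPowerSeries.ringHom) (HH N)))) = 0 := by
    rw [mul_assoc, PowerSeries.coeff_C_mul]
    rw [show ((PowerSeries.X : PowerSeries Kq)^d) * (PowerSeries.coeff (R := (PowerSeries Kq)) r) _
        = (PowerSeries.X : PowerSeries Kq)^d * (PowerSeries.coeff (R := (PowerSeries Kq)) r)
          (PowerSeries.X ^ (N * d) * ((PowerSeries.map (PowerSeries.C (R := Kq)) (Vip N ^ d) *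
            PowerSeries.map (Polynomial.coeToPowerSeries.ringHom) (HH N)))) from rfl]
    rw [PowerSeries.coeff_X_pow_mul', if_neg (by omega)]
  rw [hrem, add_zero]

lemma inv_uniq {D c e : PowerSeries Kq} (h1 : D * c = 1) (h2 : D * e = 1) : c = e := by
  calc c = (D*e)*c := by rw [h2, one_mul]
    _ = (D*c)*e := by ring
    _ = e := by rw [h1, one_mul]

lemma hInv (N d : ℕ) (hd : 1 ≤ d) :
    ((1 - PowerSeries.X) ^ (N * d) *
        (1 - PowerSeries.C (R := Kq) RatFunc.X * PowerSeries.X) ^ (d + 1))⁻¹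
      = Vip N ^ d * geo RatFunc.X := by
  have h1 : (1 - PowerSeries.X : PowerSeries Kq) ^ (N * d) *
      (1 - PowerSeries.C (R := Kq) RatFunc.X * PowerSeries.X) ^ (d + 1)
        = Vp N ^ d * (1 - PowerSeries.C (R := Kq) RatFunc.X * PowerSeries.X) := by
    unfold Vp
    rw [mul_pow, ← pow_mul, pow_succ]
    ring
  have hmul : ((1 - PowerSeries.X : PowerSeries Kq) ^ (N * d) *
      (1 - PowerSeries.C (R := Kq) RatFunc.X * PowerSeries.X) ^ (d + 1)) *
        (Vip N ^ d * geo RatFunc.X) = 1 := by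
    rw [h1]
    calc Vp N ^ d * (1 - PowerSeries.C (R := Kq) RatFunc.X * PowerSeries.X) *
          (Vip N ^ d * geo RatFunc.X)
        = (Vp N * Vip N) ^ d *
            ((1 - PowerSeries.C (R := Kq) RatFunc.X * PowerSeries.X) * geo RatFunc.X) := by
          rw [mul_pow]; ring
      _ = 1 := by rw [VVi, geo_spec, one_pow, mul_one]
  have hne : PowerSeries.constantCoeff (R := Kq) ((1 - PowerSeries.X) ^ (N * d) *
      (1 - PowerSeries.C (R := Kq) RatFunc.X * PowerSeries.X) ^ (d + 1)) ≠ 0 := by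
    simp
  exact inv_uniq (PowerSeries.mul_inv_cancel _ hne) hmul


theorem coeff_qd_hook_sum (N d ℓ : ℕ) (hN : 1 ≤ N) (hd : 1 ≤ d) (hℓ : 1 ≤ ℓ) :
    (∑ m ∈ Finset.range (N + 1),
        Polynomial.C ((-(RatFunc.X : RatFunc ℚ)) ^ m) * Matrix.det (hookM N m ℓ)).coeff d
      = (-1 : RatFunc ℚ) ^ N *
        PowerSeries.coeff (R := RatFunc ℚ) ℓ
          (PowerSeries.C (R := RatFunc ℚ) RatFunc.X * PowerSeries.X ^ (N * (d - 1) + 1) *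
            ((1 - PowerSeries.X) ^ (N * d) *
              (1 - PowerSeries.C (R := RatFunc ℚ) RatFunc.X * PowerSeries.X) ^ (d + 1))⁻¹) := by
  obtain ⟨d', rfl⟩ : ∃ d', d = d' + 1 := ⟨d - 1, by omega⟩
  obtain ⟨l', rfl⟩ : ∃ l', ℓ = l' + 1 := ⟨ℓ - 1, by omega⟩
  rw [KEY1 N (l'+1) hN hℓ]
  have hL : ((-1:Rq)^N * (yy^(N+(l'+1))
      + Polynomial.X * ∑ b ∈ Finset.range (l'+1), yy^(b+1) * hh N (l'+1-1-b))).coeff (d'+1)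
      = (-1:Kq)^N * ∑ b ∈ Finset.range (l'+1),
          RatFunc.X^(b+1) * (hh N (l'+1-1-b)).coeff d' := by
    rw [show ((-1:Rq)^N) = Polynomial.C ((-1:Kq)^N) from by rw [map_pow, map_neg, map_one],
      Polynomial.coeff_C_mul, Polynomial.coeff_add]
    rw [show (yy^(N+(l'+1)) : Rq) = Polynomial.C (RatFunc.X^(N+(l'+1))) from by
      rw [yy, ← map_pow]]
    rw [Polynomial.coeff_C, if_neg (by omega), Polynomial.coeff_X_mul, zero_add]
    rw [Polynomial.finset_sum_coeff]
    congr 1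
    apply Finset.sum_congr rfl
    intro b _
    rw [show (yy^(b+1) : Rq) = Polynomial.C (RatFunc.X^(b+1)) from by rw [yy, ← map_pow],
      Polynomial.coeff_C_mul]
  rw [hL]
  congr 1
  rw [hInv N (d'+1) hd]
  rw [show (PowerSeries.X : PowerSeries Kq) ^ (N * (d'+1-1) + 1)
      = PowerSeries.X ^ (N * d') * PowerSeries.X from by rw [pow_succ]; norm_num]
  have hassoc : PowerSeries.C (R := Kq) RatFunc.X *
      (PowerSeries.X ^ (N * d') * PowerSeries.X) * (Vip N ^ (d'+1) * geo RatFunc.X)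
      = PowerSeries.C (R := Kq) RatFunc.X * (PowerSeries.X *
          ((PowerSeries.X ^ (N * d') * Vip N ^ (d'+1)) * geo RatFunc.X)) := by ring
  rw [hassoc, PowerSeries.coeff_C_mul, PowerSeries.coeff_succ_X_mul]
  rw [PowerSeries.coeff_mul, Finset.Nat.sum_antidiagonal_eq_sum_range_succ_mk]
  rw [Finset.mul_sum]
  rw [← Finset.sum_range_reflect]
  apply Finset.sum_congr rfl
  intro b hb
  simp only [Finset.mem_range] at hb
  have hce := hc_eq N (d'+1) hN hd b
  simp only [Nat.add_sub_cancel] at hce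
  rw [show l'+1-1-(l'+1-1-b) = b from by omega, hce]
  simp only [geo, PowerSeries.coeff_mk]
  rw [show l'+1-1-b+1 = l'-b+1 from by omega]
  rw [show RatFunc.X ^ (l'-b+1) = RatFunc.X ^ (l'-b) * RatFunc.X from pow_succ _ _]
  ring
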